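/- For any nonnegative integers a, b, c with a ≤ b, f_r(a+c) f_r(b+c) / f_r(c) ≤ (a+c)! (b+c)! / c!. -/

import Mathlib

/-- The truncated factorial: `f_r(x) = x!` for `x ≤ r`, `r! r^(x-r)` otherwise. -/
def truncFactorial (r x : ℕ) : ℕ :=
  if x ≤ r then Nat.factorial x else Nat.factorial r * r ^ (x - r)

lemma truncFactorial_pos (r x : ℕ) (hr : 0 < r) : 0 < truncFactorial r x := by
  unfold truncFactorial
  split
  · exact Nat.factorial_pos x
  · exact Nat.mul_pos (Nat.factorial_pos r) (Nat.pow_pos hr)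

lemma truncFactorial_succ_le (r x : ℕ) :
    truncFactorial r (x + 1) ≤ (x + 1) * truncFactorial r x := by
  unfold truncFactorial
  rcases le_or_gt (x + 1) r with h | h
  · rw [if_pos h, if_pos (Nat.le_of_succ_le h), Nat.factorial_succ]
  · rw [if_neg (not_le.mpr h)]
    rcases le_or_gt x r with h2 | h2
    · have hx : x = r := le_antisymm h2 (Nat.lt_succ_iff.mp h)
      subst hx
      rw [if_pos le_rfl]
      have hx1 : x + 1 - x = 1 := by omega
      rw [hx1, pow_one]
      nlinarith [Nat.factorial_pos x]
    · rw [if_neg (not_le.mpr h2)]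
      have : x + 1 - r = (x - r) + 1 := by omega
      rw [this, pow_succ]
      calc r.factorial * (r ^ (x-r) * r) = r * (r.factorial * r ^ (x-r)) := by ring
        _ ≤ (x+1) * (r.factorial * r ^ (x-r)) := Nat.mul_le_mul_right _ (by omega)

lemma truncFactorial_le_factorial (r x : ℕ) :
    truncFactorial r x ≤ Nat.factorial x := by
  induction x with
  | zero => simp [truncFactorial]
  | succ n ih =>
      calc truncFactorial r (n+1) ≤ (n+1) * truncFactorial r n := truncFactorial_succ_le r n
        _ ≤ (n+1) * n.factorial := Nat.mul_le_mul_left _ ih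
        _ = (n+1).factorial := (Nat.factorial_succ n).symm

lemma truncFactorial_ratio (r b c : ℕ) :
    truncFactorial r (c + b) * Nat.factorial c ≤ Nat.factorial (c + b) * truncFactorial r c := by
  induction b with
  | zero => simp [mul_comm]
  | succ n ih =>
      have h1 := truncFactorial_succ_le r (c + n)
      calc truncFactorial r (c + (n+1)) * c.factorial
          = truncFactorial r ((c+n)+1) * c.factorial := by ring_nf
        _ ≤ ((c+n+1) * truncFactorial r (c+n)) * c.factorial :=
            Nat.mul_le_mul_right _ h1
        _ = (c+n+1) * (truncFactorial r (c+n) * c.factorial) := by ring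
        _ ≤ (c+n+1) * ((c+n).factorial * truncFactorial r c) := Nat.mul_le_mul_left _ ih
        _ = ((c+n).factorial * (c+n+1)) * truncFactorial r c := by ring
        _ = (c + (n+1)).factorial * truncFactorial r c := by
            have : c + (n+1) = (c+n)+1 := by omega
            rw [this, Nat.factorial_succ]; ring

/-- For nonnegative integers `a ≤ b` and `c`,
`f_r(a+c) f_r(b+c) / f_r(c) ≤ (a+c)! (b+c)! / c!`. -/
theorem truncFactorial_ratio_le (r a b c : ℕ) (hr : 0 < r) (hab : a ≤ b) :
    (truncFactorial r (a + c) : ℝ) * truncFactorial r (b + c) / truncFactorial r c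
      ≤ (Nat.factorial (a + c) : ℝ) * Nat.factorial (b + c) / Nat.factorial c := by
  have h0 : (0 : ℝ) < truncFactorial r c := by exact_mod_cast truncFactorial_pos r c hr
  have h1 : (0 : ℝ) < Nat.factorial c := by exact_mod_cast Nat.factorial_pos c
  rw [div_le_div_iff₀ h0 h1]
  have key : truncFactorial r (a + c) * truncFactorial r (b + c) * Nat.factorial c
      ≤ Nat.factorial (a + c) * Nat.factorial (b + c) * truncFactorial r c := by
    calc truncFactorial r (a + c) * truncFactorial r (b + c) * Nat.factorial c
        = truncFactorial r (a + c) * (truncFactorial r (c + b) * Nat.factorial c) := by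
          rw [Nat.add_comm c b]; ring
      _ ≤ Nat.factorial (a + c) * (Nat.factorial (c + b) * truncFactorial r c) :=
          Nat.mul_le_mul (truncFactorial_le_factorial r (a+c)) (truncFactorial_ratio r b c)
      _ = Nat.factorial (a + c) * Nat.factorial (b + c) * truncFactorial r c := by
          rw [Nat.add_comm c b]; ring
  calc (truncFactorial r (a + c) : ℝ) * truncFactorial r (b + c) * Nat.factorial c
      = ((truncFactorial r (a + c) * truncFactorial r (b + c) * Nat.factorial c : ℕ) : ℝ) := by
        push_cast; ring
    _ ≤ ((Nat.factorial (a + c) * Nat.factorial (b + c) * truncFactorial r c : ℕ) : ℝ) := by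
        exact_mod_cast key
    _ = (Nat.factorial (a + c) : ℝ) * Nat.factorial (b + c) * truncFactorial r c := by push_cast; ring
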